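/- Let d ≥ 1, let k ≥ 1 be an integer, let ζ > 0, β ≥ 0 and ρ̄ ∈ (0,1). Let A be a d×d real matrix with ‖A^t‖₂ ≤ β·ρ̄^t for every integer t ≥ 0, let v ∈ ℝ^d, let w ∈ ℝ^d with ‖w‖₂ = 1, and let s : ℕ → ℝ^d be k-periodic (s_{t+k} = s_t for all t) with zero mean over a period, i.e. Σ_{t=0}^{k−1} s_t = 0. Set α := Σ_{t=0}^{k−1} (wᵀ s_t)², define x_t := s_t + A^t·v, and for an integer T' ≥ 0 let x̄ := (1/k)·Σ_{t=T'}^{T'+k−1} x_t. If ‖v‖₂²·β²·ρ̄^{2T'}/(1−ρ̄²) ≤ k·ζ/2 and 2·‖v‖₂·β·ρ̄^{T'}·√α/√(1−ρ̄²) ≤ k·ζ/2, then |Σ_{t=T'}^{T'+k−1} (wᵀ(x_t − x̄))² − α| ≤ k·ζ. -/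

import Mathlib

noncomputable section

open Matrix

/-- Euclidean norm of a real vector. -/
def enormR {n : Type*} [Fintype n] (v : n → ℝ) : ℝ :=
  Real.sqrt (∑ i, (v i) ^ 2)

/-- Spectral norm (ℓ² → ℓ² operator norm) of a real matrix. -/
def snormR {m n : Type*} [Fintype m] [Fintype n] (M : Matrix m n ℝ) : ℝ :=
  sSup {r : ℝ | ∃ v : n → ℝ, enormR v ≤ 1 ∧ r = enormR (M.mulVec v)}

lemma enormR_nonneg {n : Type*} [Fintype n] (v : n → ℝ) : 0 ≤ enormR v :=
  Real.sqrt_nonneg _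

lemma sq_enormR {n : Type*} [Fintype n] (v : n → ℝ) : enormR v ^ 2 = ∑ i, v i ^ 2 :=
  Real.sq_sqrt (Finset.sum_nonneg fun i _ => sq_nonneg _)

lemma enormR_smul {n : Type*} [Fintype n] (c : ℝ) (hc : 0 ≤ c) (v : n → ℝ) :
    enormR (c • v) = c * enormR v := by
  unfold enormR
  simp only [Pi.smul_apply, smul_eq_mul, mul_pow]
  rw [← Finset.mul_sum, Real.sqrt_mul (by positivity), Real.sqrt_sq hc]

lemma abs_dot_le {n : Type*} [Fintype n] (w x : n → ℝ) :
    |dotProduct w x| ≤ enormR w * enormR x := by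
  rw [← Real.sqrt_sq_eq_abs]
  unfold enormR
  rw [← Real.sqrt_mul (Finset.sum_nonneg fun i _ => sq_nonneg _)]
  exact Real.sqrt_le_sqrt (Finset.sum_mul_sq_le_sq_mul_sq _ _ _)

lemma enormR_mulVec_le {n : Type*} [Fintype n] (M : Matrix n n ℝ) (u : n → ℝ) :
    enormR (M.mulVec u) ≤ snormR M * enormR u := by
  set S := {r : ℝ | ∃ v : n → ℝ, enormR v ≤ 1 ∧ r = enormR (M.mulVec v)} with hS
  have hbdd : BddAbove S := by
    refine ⟨Real.sqrt (∑ i, ∑ j, M i j ^ 2), fun r hr => ?_⟩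
    obtain ⟨x, hx1, rfl⟩ := hr
    unfold enormR
    apply Real.sqrt_le_sqrt
    have hx2 : ∑ j, x j ^ 2 ≤ 1 := by
      have := sq_enormR x
      nlinarith [enormR_nonneg x, sq_enormR x]
    calc ∑ i, (M.mulVec x i) ^ 2
        ≤ ∑ i, (∑ j, M i j ^ 2) * ∑ j, x j ^ 2 := by
          refine Finset.sum_le_sum fun i _ => ?_
          exact Finset.sum_mul_sq_le_sq_mul_sq _ _ _
      _ ≤ ∑ i, ∑ j, M i j ^ 2 := by
          refine Finset.sum_le_sum fun i _ => ?_
          have h0 : 0 ≤ ∑ j, M i j ^ 2 := Finset.sum_nonneg fun j _ => sq_nonneg _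
          nlinarith
  by_cases hu : u = 0
  · subst hu
    have h0 : (0 : ℝ) ∈ S := by
      refine ⟨0, ?_, ?_⟩
      · simp [enormR]
      · simp [enormR, Matrix.mulVec_zero]
    have hsn : 0 ≤ snormR M := le_csSup hbdd h0
    simp only [Matrix.mulVec_zero]
    have : enormR (0 : n → ℝ) = 0 := by simp [enormR]
    rw [this]
    have : enormR (fun _ => (0:ℝ) : n → ℝ) = 0 := by simp [enormR]
    have henu : enormR (0 : n → ℝ) = 0 := by simp [enormR]
    positivity
  · have hpos : 0 < enormR u := by
      obtain ⟨i, hi⟩ := Function.ne_iff.mp hu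
      apply Real.sqrt_pos.mpr
      apply Finset.sum_pos' (fun i _ => sq_nonneg _)
      exact ⟨i, Finset.mem_univ i, by nlinarith [abs_pos.mpr hi, sq_abs (u i)]⟩
    set c := (enormR u)⁻¹ with hc
    have hcpos : 0 < c := inv_pos.mpr hpos
    have hmem : enormR (M.mulVec (c • u)) ∈ S := by
      refine ⟨c • u, ?_, rfl⟩
      rw [enormR_smul c hcpos.le, hc, inv_mul_cancel₀ hpos.ne']
    have hle : enormR (M.mulVec (c • u)) ≤ snormR M := le_csSup hbdd hmem
    rw [Matrix.mulVec_smul, enormR_smul c hcpos.le] at hle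
    calc enormR (M.mulVec u) = enormR u * (c * enormR (M.mulVec u)) := by
          rw [← mul_assoc, hc, mul_inv_cancel₀ hpos.ne', one_mul]
      _ ≤ enormR u * snormR M := by
          exact mul_le_mul_of_nonneg_left hle hpos.le
      _ = snormR M * enormR u := mul_comm _ _

lemma sum_shift {M : Type*} [AddCommGroup M] (g : ℕ → M) (k : ℕ)
    (hg : ∀ t, g (t + k) = g t) :
    ∀ T, ∑ j ∈ Finset.range k, g (T + j) = ∑ j ∈ Finset.range k, g j := by
  intro T
  induction T with
  | zero => simp
  | succ T ih =>
    have h1 : ∑ j ∈ Finset.range (k+1), g (T + j)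
        = (∑ j ∈ Finset.range k, g (T + (j+1))) + g (T + 0) :=
      Finset.sum_range_succ' (fun j => g (T + j)) k
    have h2 : ∑ j ∈ Finset.range (k+1), g (T + j)
        = (∑ j ∈ Finset.range k, g (T + j)) + g (T + k) :=
      Finset.sum_range_succ (fun j => g (T + j)) k
    have e : ∑ j ∈ Finset.range k, g (T + 1 + j) = ∑ j ∈ Finset.range k, g (T + (j+1)) := by
      refine Finset.sum_congr rfl fun j _ => ?_
      congr 1; omega
    rw [e]
    have := hg T
    rw [this] at h2
    rw [← ih]
    have : (∑ j ∈ Finset.range k, g (T + (j+1))) = ∑ j ∈ Finset.range k, g (T + j) := by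
      have := h1.symm.trans h2
      simp only [Nat.add_zero] at this
      -- this : ∑ g(T+(j+1)) + g T = ∑ g(T+j) + g T
      exact add_right_cancel this
    rw [this]

lemma dot_sum {n ι : Type*} [Fintype n] (w : n → ℝ) (t : Finset ι) (x : ι → n → ℝ) :
    dotProduct w (∑ j ∈ t, x j) = ∑ j ∈ t, dotProduct w (x j) := by
  simp only [dotProduct, Finset.sum_apply, Finset.mul_sum]
  rw [Finset.sum_comm]

/-- **Mean-subtracted transient lemma.**  If `s` is `k`-periodic with zero mean over a
period, `‖A^t‖₂ ≤ β·ρ̄^t`, and the burn-in conditions on `T'` hold, then the mean-subtracted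
window power of `x_t = s_t + A^t·v` in direction `w` over `[T', T'+k−1]` is within `k·ζ` of
the steady-state window power `α = Σ_{t<k} (wᵀ s_t)²`. -/
theorem stmt6 {d : ℕ} (hd : 1 ≤ d) (k : ℕ) (hk : 1 ≤ k) (ζ β ρ : ℝ)
    (hζ : 0 < ζ) (hβ : 0 ≤ β) (hρ0 : 0 < ρ) (hρ1 : ρ < 1)
    (A : Matrix (Fin d) (Fin d) ℝ)
    (hA : ∀ t : ℕ, snormR (A ^ t) ≤ β * ρ ^ t)
    (v w : Fin d → ℝ) (hw : enormR w = 1)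
    (s : ℕ → Fin d → ℝ) (hper : ∀ t, s (t + k) = s t)
    (hmean : ∑ t ∈ Finset.range k, s t = 0) :
    ∀ T' : ℕ,
      enormR v ^ 2 * β ^ 2 * ρ ^ (2 * T') / (1 - ρ ^ 2) ≤ k * ζ / 2 →
      2 * enormR v * β * ρ ^ T' *
          Real.sqrt (∑ t ∈ Finset.range k, (dotProduct w (s t)) ^ 2) /
          Real.sqrt (1 - ρ ^ 2) ≤ k * ζ / 2 →
      |(∑ j ∈ Finset.range k,
          (dotProduct w
            ((s (T' + j) + (A ^ (T' + j)).mulVec v) -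
              (k : ℝ)⁻¹ • ∑ j' ∈ Finset.range k, (s (T' + j') + (A ^ (T' + j')).mulVec v))) ^ 2) -
        ∑ t ∈ Finset.range k, (dotProduct w (s t)) ^ 2| ≤ k * ζ := by
  intro T' h1 h2
  have hkpos : (0 : ℝ) < k := by exact_mod_cast hk
  have hguard : (0 : ℝ) < 1 - ρ ^ 2 := by nlinarith
  set α := ∑ t ∈ Finset.range k, (dotProduct w (s t)) ^ 2 with hα
  set a : ℕ → ℝ := fun j => dotProduct w (s (T' + j)) with ha
  set c : ℕ → ℝ := fun j => dotProduct w ((A ^ (T' + j)).mulVec v) with hc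
  set m : ℝ := (k : ℝ)⁻¹ * ∑ j ∈ Finset.range k, c j with hm
  have hαnn : 0 ≤ α := Finset.sum_nonneg fun t _ => sq_nonneg _
  have hs0 : ∑ j ∈ Finset.range k, s (T' + j) = 0 := by
    rw [sum_shift s k hper T']; exact hmean
  -- rewrite each term of the window sum
  have hterm : ∀ j ∈ Finset.range k,
      (dotProduct w
        ((s (T' + j) + (A ^ (T' + j)).mulVec v) -
          (k : ℝ)⁻¹ • ∑ j' ∈ Finset.range k, (s (T' + j') + (A ^ (T' + j')).mulVec v))) ^ 2
      = (a j + (c j - m)) ^ 2 := by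
    intro j _
    congr 1
    rw [Finset.sum_add_distrib, hs0, zero_add, dotProduct_sub,
      dotProduct_add, dotProduct_smul, dot_sum, smul_eq_mul]
    rw [ha, hc, hm]
    ring
  rw [Finset.sum_congr rfl hterm]
  have hA2 : ∑ j ∈ Finset.range k, a j ^ 2 = α := by
    rw [hα]
    exact sum_shift (fun t => (dotProduct w (s t)) ^ 2) k
      (fun t => by show (dotProduct w (s (t + k))) ^ 2 = _; rw [hper]) T'
  have key : ∑ j ∈ Finset.range k, (a j + (c j - m)) ^ 2 - α
      = 2 * (∑ j ∈ Finset.range k, a j * (c j - m)) +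
        ∑ j ∈ Finset.range k, (c j - m) ^ 2 := by
    rw [← hA2, ← Finset.sum_sub_distrib, Finset.mul_sum, ← Finset.sum_add_distrib]
    exact Finset.sum_congr rfl fun j _ => by ring
  rw [key]
  set E := ∑ j ∈ Finset.range k, c j ^ 2 with hE
  have hEnn : 0 ≤ E := Finset.sum_nonneg fun j _ => sq_nonneg _
  -- bound on E
  have hcb : ∀ j : ℕ, c j ^ 2 ≤ (β * enormR v) ^ 2 * (ρ ^ 2) ^ (T' + j) := by
    intro j
    have h3 : |c j| ≤ β * ρ ^ (T' + j) * enormR v := by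
      calc |c j| ≤ enormR w * enormR ((A ^ (T' + j)).mulVec v) := abs_dot_le _ _
        _ = enormR ((A ^ (T' + j)).mulVec v) := by rw [hw, one_mul]
        _ ≤ snormR (A ^ (T' + j)) * enormR v := enormR_mulVec_le _ _
        _ ≤ β * ρ ^ (T' + j) * enormR v :=
            mul_le_mul_of_nonneg_right (hA _) (enormR_nonneg v)
    calc c j ^ 2 = |c j| ^ 2 := (sq_abs _).symm
      _ ≤ (β * ρ ^ (T' + j) * enormR v) ^ 2 := pow_le_pow_left₀ (abs_nonneg _) h3 2
      _ = (β * enormR v) ^ 2 * (ρ ^ 2) ^ (T' + j) := by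
          rw [← pow_mul, mul_comm 2 (T' + j), pow_mul]; ring
  have hgeom : ∑ j ∈ Finset.range k, (ρ ^ 2) ^ j ≤ 1 / (1 - ρ ^ 2) := by
    have hr1 : ρ ^ 2 ≠ 1 := by nlinarith
    rw [geom_sum_eq hr1 k]
    have heq : ((ρ ^ 2) ^ k - 1) / (ρ ^ 2 - 1) = (1 - (ρ ^ 2) ^ k) / (1 - ρ ^ 2) := by
      rw [div_eq_div_iff (by nlinarith) hguard.ne']; ring
    rw [heq]
    apply div_le_div₀ (by norm_num) (by nlinarith [pow_nonneg (sq_nonneg ρ) k]) hguard le_rfl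
  have hEb : E ≤ enormR v ^ 2 * β ^ 2 * ρ ^ (2 * T') / (1 - ρ ^ 2) := by
    calc E ≤ ∑ j ∈ Finset.range k, (β * enormR v) ^ 2 * (ρ ^ 2) ^ (T' + j) :=
        Finset.sum_le_sum fun j _ => hcb j
      _ = (β * enormR v) ^ 2 * (ρ ^ 2) ^ T' * ∑ j ∈ Finset.range k, (ρ ^ 2) ^ j := by
          rw [Finset.mul_sum]
          exact Finset.sum_congr rfl fun j _ => by rw [pow_add]; ring
      _ ≤ (β * enormR v) ^ 2 * (ρ ^ 2) ^ T' * (1 / (1 - ρ ^ 2)) := by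
          exact mul_le_mul_of_nonneg_left hgeom (by positivity)
      _ = enormR v ^ 2 * β ^ 2 * ρ ^ (2 * T') / (1 - ρ ^ 2) := by
          rw [← pow_mul, mul_comm 2 T', pow_mul]; ring
  have hE1 : E ≤ k * ζ / 2 := hEb.trans h1
  -- ∑ (c j - m)^2 ≤ E
  have hck : ∑ j ∈ Finset.range k, c j = k * m := by
    rw [hm]; field_simp
  have hbE : ∑ j ∈ Finset.range k, (c j - m) ^ 2 = E - k * m ^ 2 := by
    calc ∑ j ∈ Finset.range k, (c j - m) ^ 2
        = ∑ j ∈ Finset.range k, (c j ^ 2 - 2 * m * c j + m ^ 2) :=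
          Finset.sum_congr rfl fun j _ => by ring
      _ = E - 2 * m * (∑ j ∈ Finset.range k, c j) + k * m ^ 2 := by
          rw [Finset.sum_add_distrib, Finset.sum_sub_distrib, ← Finset.mul_sum,
            Finset.sum_const, Finset.card_range, nsmul_eq_mul]
      _ = E - k * m ^ 2 := by rw [hck]; ring
  have hb2 : ∑ j ∈ Finset.range k, (c j - m) ^ 2 ≤ E := by
    rw [hbE]; nlinarith [sq_nonneg m]
  have hbnn : 0 ≤ ∑ j ∈ Finset.range k, (c j - m) ^ 2 :=
    Finset.sum_nonneg fun j _ => sq_nonneg _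
  -- Cauchy-Schwarz for the cross term
  set S := ∑ j ∈ Finset.range k, a j * (c j - m) with hS
  have hcs : S ^ 2 ≤ α * E := by
    calc S ^ 2 ≤ (∑ j ∈ Finset.range k, a j ^ 2) *
          ∑ j ∈ Finset.range k, (c j - m) ^ 2 :=
        Finset.sum_mul_sq_le_sq_mul_sq _ _ _
      _ = α * ∑ j ∈ Finset.range k, (c j - m) ^ 2 := by rw [hA2]
      _ ≤ α * E := mul_le_mul_of_nonneg_left hb2 hαnn
  have habs : |S| ≤ Real.sqrt α * Real.sqrt E := by
    rw [← Real.sqrt_sq_eq_abs, ← Real.sqrt_mul hαnn]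
    exact Real.sqrt_le_sqrt hcs
  have hsE : Real.sqrt E ≤ enormR v * β * ρ ^ T' / Real.sqrt (1 - ρ ^ 2) := by
    have hEb2 : E ≤ (enormR v * β * ρ ^ T') ^ 2 / (1 - ρ ^ 2) := by
      calc E ≤ enormR v ^ 2 * β ^ 2 * ρ ^ (2 * T') / (1 - ρ ^ 2) := hEb
        _ = (enormR v * β * ρ ^ T') ^ 2 / (1 - ρ ^ 2) := by
            rw [mul_comm 2 T', pow_mul]; ring
    calc Real.sqrt E ≤ Real.sqrt ((enormR v * β * ρ ^ T') ^ 2 / (1 - ρ ^ 2)) :=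
        Real.sqrt_le_sqrt hEb2
      _ = enormR v * β * ρ ^ T' / Real.sqrt (1 - ρ ^ 2) := by
          rw [Real.sqrt_div (sq_nonneg _), Real.sqrt_sq (mul_nonneg (mul_nonneg (enormR_nonneg v) hβ) (pow_nonneg hρ0.le T'))]
  have hcross : 2 * |S| ≤ k * ζ / 2 := by
    have hstep : |S| ≤ Real.sqrt α * (enormR v * β * ρ ^ T' / Real.sqrt (1 - ρ ^ 2)) :=
      habs.trans (mul_le_mul_of_nonneg_left hsE (Real.sqrt_nonneg α))
    calc 2 * |S| ≤ 2 * (Real.sqrt α * (enormR v * β * ρ ^ T' / Real.sqrt (1 - ρ ^ 2))) := by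
          linarith
      _ = 2 * enormR v * β * ρ ^ T' * Real.sqrt α / Real.sqrt (1 - ρ ^ 2) := by ring
      _ ≤ k * ζ / 2 := h2
  calc |2 * S + ∑ j ∈ Finset.range k, (c j - m) ^ 2|
      ≤ |2 * S| + |∑ j ∈ Finset.range k, (c j - m) ^ 2| := abs_add_le _ _
    _ = 2 * |S| + ∑ j ∈ Finset.range k, (c j - m) ^ 2 := by
        rw [abs_mul, abs_two, abs_of_nonneg hbnn]
    _ ≤ k * ζ / 2 + k * ζ / 2 := add_le_add hcross (hb2.trans hE1)
    _ = k * ζ := by ring
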